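/- Suppose a ∈ ℝ^n and B ∈ ℝ^{n×n²} satisfy e = a + B(e ⊗ e), x* ∈ ℝ^n satisfies x* = a + B(x* ⊗ x*) with 0 ≤ x* < e entrywise, and L = I − B(x* ⊗ I + I ⊗ x*) is invertible. Let ã ∈ ℝ^n and B̃ ∈ ℝ^{n×n²} satisfy e = ã + B̃(e ⊗ e), and set ΔB = B̃ − B, δ = ‖ΔB‖, ℓ = ‖L⁻¹‖, b̃ = ‖B̃‖, d = ‖x* ⊗ x* − e ⊗ e‖. Assume ‖x*‖·δ + √(b̃·d·δ) ≤ 1/(2ℓ) and 2ℓδ‖x*‖ + √((1 − 2ℓδ‖x*‖)² − 4ℓ²b̃dδ) > max{ 1 − 2ℓb̃(1 − ‖x*‖), 1 − 2ℓb̃(1 − ‖e − x*‖) }. If the perturbed QVE x = ã + B̃(x ⊗ x) has at most one solution x with 0 ≤ x < e, and x̃* is a solution of the perturbed QVE with 0 ≤ x̃* < e, then ‖x̃* − x*‖ ≤ ξ*, where ξ* = 2ℓdδ / (1 − 2ℓδ‖x*‖ + √((1 − 2ℓδ‖x*‖)² − 4ℓ²b̃dδ)). -/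

import Mathlib

open Matrix

noncomputable section

/-- Decode an index `p ∈ Fin (n*n)` (row-major: `p = n*i + j`) into the pair `(i, j)`. -/
def kronDecode {n : ℕ} (p : Fin (n * n)) : Fin n × Fin n :=
  ⟨⟨(p : ℕ) / n, Nat.div_lt_of_lt_mul p.isLt⟩,
   ⟨(p : ℕ) % n, Nat.mod_lt _ (by
      rcases Nat.eq_zero_or_pos n with h | h
      · exact absurd p.isLt (by simp [h])
      · exact h)⟩⟩

/-- Kronecker product of two vectors in `ℝ^n`, as a vector in `ℝ^(n²)`:
`(u ⊗ v)_{n(i-1)+j} = u_i v_j` (row-major). -/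
def kron {n : ℕ} (u v : Fin n → ℝ) : Fin (n * n) → ℝ :=
  fun p => u (kronDecode p).1 * v (kronDecode p).2

/-- Kronecker product `u ⊗ I` of a vector `u ∈ ℝ^n` with the `n×n` identity:
an `n²×n` matrix with entry `u_i · δ_{jk}` at row `(i,j)`, column `k`. -/
def kronVecId {n : ℕ} (u : Fin n → ℝ) : Matrix (Fin (n * n)) (Fin n) ℝ :=
  fun p k => u (kronDecode p).1 * (if (kronDecode p).2 = k then (1 : ℝ) else 0)

/-- Kronecker product `I ⊗ u` of the `n×n` identity with a vector `u ∈ ℝ^n`: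
an `n²×n` matrix with entry `δ_{ik} · u_j` at row `(i,j)`, column `k`. -/
def kronIdVec {n : ℕ} (u : Fin n → ℝ) : Matrix (Fin (n * n)) (Fin n) ℝ :=
  fun p k => (if (kronDecode p).1 = k then (1 : ℝ) else 0) * u (kronDecode p).2

/-- The operator ∞-norm of a real matrix: the maximum absolute row sum.
(The corresponding vector norm on `Fin m → ℝ` is the sup norm `‖·‖`.) -/
def matNorm {m k : ℕ} (M : Matrix (Fin m) (Fin k) ℝ) : ℝ :=
  ⨆ i, ∑ j, |M i j|

section helpers
variable {n : ℕ}

lemma kron_add_left (a b c : Fin n → ℝ) : kron (a + b) c = kron a c + kron b c := by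
  funext p; simp [kron]; ring

lemma kron_add_right (a b c : Fin n → ℝ) : kron a (b + c) = kron a b + kron a c := by
  funext p; simp [kron]; ring

lemma kronVecId_mulVec (u v : Fin n → ℝ) : kronVecId u *ᵥ v = kron u v := by
  funext p
  simp [mulVec, dotProduct, kronVecId, kron, ite_mul, mul_ite, mul_assoc]

lemma kronIdVec_mulVec (u v : Fin n → ℝ) : kronIdVec u *ᵥ v = kron v u := by
  funext p
  simp [mulVec, dotProduct, kronIdVec, kron, ite_mul, mul_ite, mul_comm]

lemma row_le_matNorm {m k : ℕ} (M : Matrix (Fin m) (Fin k) ℝ) (i : Fin m) :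
    ∑ j, |M i j| ≤ matNorm M :=
  le_ciSup (f := fun i => ∑ j, |M i j|) (Set.Finite.bddAbove (Set.finite_range _)) i

lemma matNorm_nonneg {m k : ℕ} (hm : 0 < m) (M : Matrix (Fin m) (Fin k) ℝ) :
    0 ≤ matNorm M := by
  have i : Fin m := ⟨0, hm⟩
  exact le_trans (Finset.sum_nonneg fun j _ => abs_nonneg _) (row_le_matNorm M i)

lemma norm_mulVec_le {m k : ℕ} (hm : 0 < m) (M : Matrix (Fin m) (Fin k) ℝ)
    (v : Fin k → ℝ) : ‖M *ᵥ v‖ ≤ matNorm M * ‖v‖ := by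
  rw [pi_norm_le_iff_of_nonneg (mul_nonneg (matNorm_nonneg hm M) (norm_nonneg v))]
  intro i
  calc ‖(M *ᵥ v) i‖ = |∑ j, M i j * v j| := by simp [mulVec, dotProduct, Real.norm_eq_abs]
    _ ≤ ∑ j, |M i j * v j| := Finset.abs_sum_le_sum_abs _ _
    _ ≤ ∑ j, |M i j| * ‖v‖ := by
        refine Finset.sum_le_sum fun j _ => ?_
        rw [abs_mul]
        exact mul_le_mul_of_nonneg_left (norm_le_pi_norm v j) (abs_nonneg _)
    _ = (∑ j, |M i j|) * ‖v‖ := by rw [Finset.sum_mul]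
    _ ≤ matNorm M * ‖v‖ := mul_le_mul_of_nonneg_right (row_le_matNorm M i) (norm_nonneg _)

lemma norm_kron_le (u v : Fin n → ℝ) : ‖kron u v‖ ≤ ‖u‖ * ‖v‖ := by
  rw [pi_norm_le_iff_of_nonneg (mul_nonneg (norm_nonneg u) (norm_nonneg v))]
  intro p
  rw [kron, norm_mul]
  exact mul_le_mul (norm_le_pi_norm u _) (norm_le_pi_norm v _) (norm_nonneg _) (norm_nonneg _)

lemma norm_kron_sym_le (u h : Fin n → ℝ) :
    ‖kron u h + kron h u‖ ≤ 2 * ‖u‖ * ‖h‖ := by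
  calc ‖kron u h + kron h u‖ ≤ ‖kron u h‖ + ‖kron h u‖ := norm_add_le _ _
    _ ≤ ‖u‖ * ‖h‖ + ‖h‖ * ‖u‖ := add_le_add (norm_kron_le u h) (norm_kron_le h u)
    _ = 2 * ‖u‖ * ‖h‖ := by ring

lemma matNorm_eq_zero {m k : ℕ} (hm : 0 < m) {M : Matrix (Fin m) (Fin k) ℝ}
    (h : matNorm M = 0) : M = 0 := by
  ext i j
  have h1 : ∑ j', |M i j'| ≤ 0 := h ▸ row_le_matNorm M i
  have h2 : ∀ j' ∈ Finset.univ, |M i j'| = 0 := by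
    intro j' _
    have := Finset.sum_nonneg (fun j'' (_ : j'' ∈ Finset.univ) => abs_nonneg (M i j''))
    have hz : ∑ j', |M i j'| = 0 := le_antisymm h1 this
    exact (Finset.sum_eq_zero_iff_of_nonneg (fun j'' _ => abs_nonneg _)).mp hz j' (Finset.mem_univ _)
  simpa using abs_eq_zero.mp (h2 j (Finset.mem_univ _))

lemma continuous_mulVec {m k : ℕ} (M : Matrix (Fin m) (Fin k) ℝ) :
    Continuous fun v : Fin k → ℝ => M *ᵥ v := by
  refine continuous_pi fun i => ?_
  simp only [mulVec, dotProduct]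
  exact continuous_finset_sum _ fun j _ => continuous_const.mul (continuous_apply j)

lemma continuous_kron_self : Continuous fun x : Fin n → ℝ => kron x x := by
  refine continuous_pi fun p => ?_
  exact (continuous_apply _).mul (continuous_apply _)

end helpers

/-- The scalar majorant sequence. -/
def majorant (c0 c1 c2 : ℝ) : ℕ → ℝ
  | 0 => 0
  | k + 1 => c0 + c1 * majorant c0 c1 c2 k + c2 * majorant c0 c1 c2 k ^ 2

section identities
variable {n : ℕ} (a : Fin n → ℝ) (B : Matrix (Fin n) (Fin (n * n)) ℝ)
  (xs at_ e : Fin n → ℝ) (Bt : Matrix (Fin n) (Fin (n * n)) ℝ)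
  (L : Matrix (Fin n) (Fin n) ℝ) (ΔB : Matrix (Fin n) (Fin (n * n)) ℝ)

lemma kron_diff (xs x x' : Fin n → ℝ) :
    kron x x - kron x' x' =
      (kron xs (x - x') + kron (x - x') xs) +
      (kron (x - xs) (x - x') + kron (x - x') (x' - xs)) := by
  funext p; simp only [kron, Pi.sub_apply, Pi.add_apply]; ring

lemma ID1 (heq : e = a + B *ᵥ kron e e) (hxs : xs = a + B *ᵥ kron xs xs)
    (heqt : e = at_ + Bt *ᵥ kron e e)
    (hL : L = 1 - B * (kronVecId xs + kronIdVec xs)) (hΔB : ΔB = Bt - B)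
    (h : Fin n → ℝ) :
    at_ + Bt *ᵥ kron (xs + h) (xs + h) - (xs + h) =
      (ΔB *ᵥ (kron xs xs - kron e e) + ΔB *ᵥ (kron xs h + kron h xs)
        + Bt *ᵥ kron h h) - L *ᵥ h := by
  have ha : B *ᵥ kron e e = e - a := eq_sub_of_add_eq' heq.symm
  have hb : B *ᵥ kron xs xs = xs - a := eq_sub_of_add_eq' hxs.symm
  have hc : Bt *ᵥ kron e e = e - at_ := eq_sub_of_add_eq' heqt.symm
  rw [hΔB, hL, kron_add_left, kron_add_right, kron_add_right]
  rw [Matrix.sub_mulVec, Matrix.sub_mulVec, Matrix.sub_mulVec, Matrix.one_mulVec,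
    ← Matrix.mulVec_mulVec, Matrix.add_mulVec, kronVecId_mulVec, kronIdVec_mulVec]
  simp only [Matrix.mulVec_add, Matrix.mulVec_sub, ha, hb, hc]
  abel

lemma ID2 (hL : L = 1 - B * (kronVecId xs + kronIdVec xs)) (hΔB : ΔB = Bt - B)
    (x x' : Fin n → ℝ) :
    (at_ + Bt *ᵥ kron x x - x) - (at_ + Bt *ᵥ kron x' x' - x') =
      (ΔB *ᵥ (kron xs (x - x') + kron (x - x') xs)
        + Bt *ᵥ (kron (x - xs) (x - x') + kron (x - x') (x' - xs))) - L *ᵥ (x - x') := by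
  have hk := kron_diff xs x x'
  have hk2 : kron x x = kron x' x' + ((kron xs (x - x') + kron (x - x') xs) +
      (kron (x - xs) (x - x') + kron (x - x') (x' - xs))) := by
    rw [← hk]; abel
  rw [hk2, hΔB, hL]
  rw [Matrix.sub_mulVec, Matrix.sub_mulVec, Matrix.one_mulVec,
    ← Matrix.mulVec_mulVec, Matrix.add_mulVec, kronVecId_mulVec, kronIdVec_mulVec]
  simp only [Matrix.mulVec_add, Matrix.mulVec_sub]
  abel

end identities

set_option maxHeartbeats 4000000 in
/-- Theorem 2.5 of the paper: under the same hypotheses as the existence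
form, if moreover the perturbed QVE has at most one solution `x` with `0 ≤ x < e`
(as holds for the QVE of a supercritical positive regular MBT) and `x̃*` is such a
solution, then `‖x̃* − x*‖ ≤ ξ*`. -/
theorem stmt3 {n : ℕ} (hn : 1 ≤ n)
    (a : Fin n → ℝ) (B : Matrix (Fin n) (Fin (n * n)) ℝ)
    (xs : Fin n → ℝ)
    (at_ : Fin n → ℝ) (Bt : Matrix (Fin n) (Fin (n * n)) ℝ)
    (e : Fin n → ℝ) (he : e = fun _ => (1 : ℝ))
    (heq : e = a + B *ᵥ kron e e)
    (hxs : xs = a + B *ᵥ kron xs xs)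
    (hxs0 : ∀ i, 0 ≤ xs i) (hxs1 : ∀ i, xs i < e i)
    (L : Matrix (Fin n) (Fin n) ℝ)
    (hL : L = 1 - B * (kronVecId xs + kronIdVec xs))
    (hLinv : IsUnit L)
    (heqt : e = at_ + Bt *ᵥ kron e e)
    (ΔB : Matrix (Fin n) (Fin (n * n)) ℝ) (hΔB : ΔB = Bt - B)
    (δ ℓ bt d : ℝ)
    (hδ : δ = matNorm ΔB) (hℓ : ℓ = matNorm L⁻¹) (hbt : bt = matNorm Bt)
    (hd : d = ‖kron xs xs - kron e e‖)
    (hcond1 : ‖xs‖ * δ + Real.sqrt (bt * d * δ) ≤ 1 / (2 * ℓ))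
    (hcond2 : max (1 - 2 * ℓ * bt * (1 - ‖xs‖)) (1 - 2 * ℓ * bt * (1 - ‖e - xs‖)) <
      2 * ℓ * δ * ‖xs‖ +
        Real.sqrt ((1 - 2 * ℓ * δ * ‖xs‖) ^ 2 - 4 * ℓ ^ 2 * bt * d * δ))
    (huniq : ∀ x y : Fin n → ℝ,
      x = at_ + Bt *ᵥ kron x x → (∀ i, 0 ≤ x i ∧ x i < e i) →
      y = at_ + Bt *ᵥ kron y y → (∀ i, 0 ≤ y i ∧ y i < e i) → x = y)
    (xts : Fin n → ℝ)
    (hxts : xts = at_ + Bt *ᵥ kron xts xts)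
    (hxts01 : ∀ i, 0 ≤ xts i ∧ xts i < e i) :
    ‖xts - xs‖ ≤ 2 * ℓ * d * δ /
      (1 - 2 * ℓ * δ * ‖xs‖ +
        Real.sqrt ((1 - 2 * ℓ * δ * ‖xs‖) ^ 2 - 4 * ℓ ^ 2 * bt * d * δ)) := by
  have hn0 : 0 < n := hn
  have hδ0 : 0 ≤ δ := hδ ▸ matNorm_nonneg hn0 ΔB
  have hℓ0 : 0 ≤ ℓ := hℓ ▸ matNorm_nonneg hn0 L⁻¹
  have hbt0 : 0 ≤ bt := hbt ▸ matNorm_nonneg hn0 Bt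
  have hd0 : 0 ≤ d := hd ▸ norm_nonneg _
  have hxsn : 0 ≤ ‖xs‖ := norm_nonneg _
  -- case δ = 0 : the perturbed equation coincides with the original one
  rcases eq_or_lt_of_le hδ0 with hδz | hδpos
  · have hΔB0 : ΔB = 0 := matNorm_eq_zero hn0 (by rw [← hδ, ← hδz])
    have hBt : Bt = B := by
      have h0 : Bt - B = 0 := by rw [← hΔB, hΔB0]
      exact sub_eq_zero.mp h0
    have hat : at_ = a := by
      have h1 : a + B *ᵥ kron e e = at_ + B *ᵥ kron e e := by
        rw [← hBt] at heq ⊢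
        rw [← heq, ← heqt]
      exact (add_right_cancel h1).symm
    have hxs' : xs = at_ + Bt *ᵥ kron xs xs := by rw [hat, hBt]; exact hxs
    have hxseq : xs = xts := huniq xs xts hxs' (fun i => ⟨hxs0 i, hxs1 i⟩) hxts hxts01
    rw [← hxseq]
    simp [← hδz]
  -- main case δ > 0
  -- ℓ > 0
  have hℓpos : 0 < ℓ := by
    rcases eq_or_lt_of_le hℓ0 with hz | h
    · exfalso
      rw [← hz] at hcond2
      norm_num [Real.sqrt_one] at hcond2
    · exact h
  have h2ℓ : (0:ℝ) < 2 * ℓ := by linarith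
  have hc1 : 2 * ℓ * ‖xs‖ * δ + 2 * ℓ * Real.sqrt (bt * d * δ) ≤ 1 := by
    have := (le_div_iff₀ h2ℓ).mp hcond1
    linarith [this]
  -- bt > 0
  have hbtpos : 0 < bt := by
    rcases eq_or_lt_of_le hbt0 with hz | h
    · exfalso
      have hs0' : Real.sqrt (bt * d * δ) = 0 := by rw [← hz]; simp
      rw [hs0'] at hc1
      have hA0 : (0:ℝ) ≤ 1 - 2 * ℓ * δ * ‖xs‖ := by linarith [hc1]
      rw [← hz] at hcond2
      have hDe : (1 - 2 * ℓ * δ * ‖xs‖) ^ 2 - 4 * ℓ ^ 2 * 0 * d * δ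
          = (1 - 2 * ℓ * δ * ‖xs‖) ^ 2 := by ring
      rw [hDe, Real.sqrt_sq hA0] at hcond2
      have hmax := le_max_left (1 - 2 * ℓ * 0 * (1 - ‖xs‖)) (1 - 2 * ℓ * 0 * (1 - ‖e - xs‖))
      linarith [hcond2, hmax]
    · exact h
  -- d > 0
  have hdpos : 0 < d := by
    have hnn : 0 < n * n := Nat.mul_pos hn0 hn0
    have hdec : kronDecode (⟨0, hnn⟩ : Fin (n * n)) = (⟨0, hn0⟩, ⟨0, hn0⟩) := by
      simp [kronDecode, Fin.ext_iff]
    have h1 : ‖(kron xs xs - kron e e) ⟨0, hnn⟩‖ ≤ d := hd ▸ norm_le_pi_norm _ _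
    have h2 : (kron xs xs - kron e e) ⟨0, hnn⟩
        = xs ⟨0, hn0⟩ * xs ⟨0, hn0⟩ - 1 := by
      simp [kron, hdec, he]
    rw [h2, Real.norm_eq_abs] at h1
    have h3 := hxs0 ⟨0, hn0⟩
    have h4 := hxs1 ⟨0, hn0⟩
    rw [he] at h4
    simp at h4
    have h5 : 1 - xs ⟨0, hn0⟩ * xs ⟨0, hn0⟩ ≤ |xs ⟨0, hn0⟩ * xs ⟨0, hn0⟩ - 1| := by
      rw [abs_sub_comm]
      exact le_abs_self _
    have h6 : xs ⟨0, hn0⟩ * xs ⟨0, hn0⟩ < 1 := by nlinarith [h3, h4]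
    linarith [h1, h5, h6]
  have hbtdδ : 0 ≤ bt * d * δ := by positivity
  have hsq : Real.sqrt (bt * d * δ) ^ 2 = bt * d * δ := Real.sq_sqrt hbtdδ
  have hsqnn : 0 ≤ Real.sqrt (bt * d * δ) := Real.sqrt_nonneg _
  have hsqpos : 0 < Real.sqrt (bt * d * δ) := Real.sqrt_pos.mpr (by positivity)
  -- abbreviations
  set A := 1 - 2 * ℓ * δ * ‖xs‖ with hA
  set D := A ^ 2 - 4 * ℓ ^ 2 * bt * d * δ with hDdef
  set S := Real.sqrt D with hSdef
  have hApos : 0 < A := by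
    rw [hA]
    linarith [hc1, mul_pos hℓpos hsqpos]
  have hA2 : 2 * ℓ * Real.sqrt (bt * d * δ) ≤ A := by
    rw [hA]; linarith [hc1]
  have hkey : (2 * ℓ * Real.sqrt (bt * d * δ)) ^ 2 = 4 * ℓ ^ 2 * (bt * d * δ) := by
    rw [mul_pow, hsq]; ring
  have hDnn : 0 ≤ D := by
    have h12 : (2 * ℓ * Real.sqrt (bt * d * δ)) ^ 2 ≤ A ^ 2 :=
      pow_le_pow_left₀ (by positivity) hA2 2
    rw [hDdef]
    linarith [hkey, h12]
  have hS2 : S ^ 2 = D := Real.sq_sqrt hDnn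
  have hS0 : 0 ≤ S := Real.sqrt_nonneg _
  have hD2 : S ^ 2 = A ^ 2 - 4 * ℓ ^ 2 * bt * d * δ := by rw [hS2, hDdef]
  have hden : 0 < A + S := by linarith
  set ξ := 2 * ℓ * d * δ / (A + S) with hξdef
  have hξA : ξ * (A + S) = 2 * ℓ * d * δ := div_mul_cancel₀ _ (ne_of_gt hden)
  have hξ0 : 0 ≤ ξ := div_nonneg (by positivity) hden.le
  have hfix : ℓ * bt * ξ ^ 2 - A * ξ + ℓ * δ * d = 0 := by
    have h0 : (A + S) ^ 2 * (ℓ * bt * ξ ^ 2 - A * ξ + ℓ * δ * d) = 0 := by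
      linear_combination (ℓ * bt * (ξ * (A + S) + 2 * ℓ * d * δ) - A * (A + S)) * hξA
        + (ℓ * δ * d) * hD2
    rcases mul_eq_zero.mp h0 with h | h
    · exact absurd h (by positivity)
    · exact h
  have hξbt : ξ * (2 * ℓ * bt) = A - S := by
    have h0 : (A + S) * (ξ * (2 * ℓ * bt) - (A - S)) = 0 := by
      linear_combination (2 * ℓ * bt) * hξA + hD2
    rcases mul_eq_zero.mp h0 with h | h
    · exact absurd h (ne_of_gt hden)
    · linarith
  have h2ℓbt : (0:ℝ) < 2 * ℓ * bt := by positivity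
  have hcond2' := max_lt_iff.mp hcond2
  have hξlt1 : ξ < 1 - ‖xs‖ := by
    have h1 := hcond2'.1
    have h2 : ξ * (2 * ℓ * bt) < (1 - ‖xs‖) * (2 * ℓ * bt) := by
      rw [hξbt, hA] at *
      linarith
    exact lt_of_mul_lt_mul_right h2 h2ℓbt.le
  have hξlt2 : ξ < 1 - ‖e - xs‖ := by
    have h1 := hcond2'.2
    have h2 : ξ * (2 * ℓ * bt) < (1 - ‖e - xs‖) * (2 * ℓ * bt) := by
      rw [hξbt, hA] at *
      linarith
    exact lt_of_mul_lt_mul_right h2 h2ℓbt.le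
  have hxslo : ∀ i, ξ < xs i := by
    intro i
    have h1 : ‖(e - xs) i‖ ≤ ‖e - xs‖ := norm_le_pi_norm _ i
    have h2 : (e - xs) i = 1 - xs i := by simp [he]
    rw [h2, Real.norm_eq_abs] at h1
    have h4 : 1 - xs i ≤ ‖e - xs‖ := le_trans (le_abs_self _) h1
    linarith
  have hxshi : ∀ i, xs i + ξ < 1 := by
    intro i
    have h1 : xs i ≤ ‖xs‖ := le_trans (le_abs_self _) (norm_le_pi_norm xs i)
    linarith
  -- the iteration map
  have hdet : IsUnit L.det := (Matrix.isUnit_iff_isUnit_det L).mp hLinv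
  have hLL : ∀ w : Fin n → ℝ, L⁻¹ *ᵥ (L *ᵥ w) = w := by
    intro w
    rw [Matrix.mulVec_mulVec, Matrix.nonsing_inv_mul L hdet, Matrix.one_mulVec]
  set F : (Fin n → ℝ) → (Fin n → ℝ) :=
    fun x => x + L⁻¹ *ᵥ (at_ + Bt *ᵥ kron x x - x) with hF
  have hFsub : ∀ x : Fin n → ℝ, F x - xs =
      L⁻¹ *ᵥ (ΔB *ᵥ (kron xs xs - kron e e)
        + ΔB *ᵥ (kron xs (x - xs) + kron (x - xs) xs)
        + Bt *ᵥ kron (x - xs) (x - xs)) := by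
    intro x
    have hid := ID1 a B xs at_ e Bt L ΔB heq hxs heqt hL hΔB (x - xs)
    have hxx : xs + (x - xs) = x := by abel
    rw [hxx] at hid
    simp only [hF]
    rw [hid, Matrix.mulVec_sub, hLL]
    abel
  have hFdiffeq : ∀ x x' : Fin n → ℝ, F x - F x' =
      L⁻¹ *ᵥ (ΔB *ᵥ (kron xs (x - x') + kron (x - x') xs)
        + Bt *ᵥ (kron (x - xs) (x - x') + kron (x - x') (x' - xs))) := by
    intro x x'
    have hid := ID2 B xs at_ Bt L ΔB hL hΔB x x'
    simp only [hF]
    have hsplit : x + L⁻¹ *ᵥ (at_ + Bt *ᵥ kron x x - x)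
        - (x' + L⁻¹ *ᵥ (at_ + Bt *ᵥ kron x' x' - x'))
        = (x - x') + L⁻¹ *ᵥ ((at_ + Bt *ᵥ kron x x - x) - (at_ + Bt *ᵥ kron x' x' - x')) := by
      simp only [Matrix.mulVec_sub, Matrix.mulVec_add]; abel
    rw [hsplit, hid, Matrix.mulVec_sub, hLL]
    abel
  -- norm bounds for the iteration map
  have hnormF : ∀ x : Fin n → ℝ,
      ‖F x - xs‖ ≤ ℓ * δ * d + 2 * ℓ * δ * ‖xs‖ * ‖x - xs‖ + ℓ * bt * ‖x - xs‖ ^ 2 := by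
    intro x
    rw [hFsub x]
    set h := x - xs with hh
    have b1 : ‖ΔB *ᵥ (kron xs xs - kron e e)‖ ≤ δ * d := by
      have h1 := norm_mulVec_le hn0 ΔB (kron xs xs - kron e e)
      rw [← hδ, ← hd] at h1; exact h1
    have b2 : ‖ΔB *ᵥ (kron xs h + kron h xs)‖ ≤ δ * (2 * ‖xs‖ * ‖h‖) := by
      have h1 := norm_mulVec_le hn0 ΔB (kron xs h + kron h xs)
      rw [← hδ] at h1
      exact le_trans h1 (mul_le_mul_of_nonneg_left (norm_kron_sym_le xs h) hδ0)
    have b3 : ‖Bt *ᵥ kron h h‖ ≤ bt * ‖h‖ ^ 2 := by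
      have h1 := norm_mulVec_le hn0 Bt (kron h h)
      rw [← hbt] at h1
      refine le_trans h1 (mul_le_mul_of_nonneg_left ?_ hbt0)
      rw [sq]
      exact norm_kron_le h h
    have btot : ‖ΔB *ᵥ (kron xs xs - kron e e) + ΔB *ᵥ (kron xs h + kron h xs)
        + Bt *ᵥ kron h h‖ ≤ δ * d + δ * (2 * ‖xs‖ * ‖h‖) + bt * ‖h‖ ^ 2 := by
      have t1 := norm_add_le (ΔB *ᵥ (kron xs xs - kron e e) + ΔB *ᵥ (kron xs h + kron h xs))
        (Bt *ᵥ kron h h)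
      have t2 := norm_add_le (ΔB *ᵥ (kron xs xs - kron e e)) (ΔB *ᵥ (kron xs h + kron h xs))
      linarith
    have final := le_trans (norm_mulVec_le hn0 L⁻¹ _)
      (mul_le_mul_of_nonneg_left btot (hℓ ▸ hℓ0 : (0:ℝ) ≤ matNorm L⁻¹))
    rw [← hℓ] at final
    calc ‖L⁻¹ *ᵥ (ΔB *ᵥ (kron xs xs - kron e e) + ΔB *ᵥ (kron xs h + kron h xs)
          + Bt *ᵥ kron h h)‖ ≤ ℓ * (δ * d + δ * (2 * ‖xs‖ * ‖h‖) + bt * ‖h‖ ^ 2) := final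
      _ = ℓ * δ * d + 2 * ℓ * δ * ‖xs‖ * ‖h‖ + ℓ * bt * ‖h‖ ^ 2 := by ring
  have hnormFd : ∀ x x' : Fin n → ℝ,
      ‖F x - F x'‖ ≤ (2 * ℓ * δ * ‖xs‖ + ℓ * bt * (‖x - xs‖ + ‖x' - xs‖)) * ‖x - x'‖ := by
    intro x x'
    rw [hFdiffeq x x']
    set w := x - x' with hw
    set h := x - xs with hh
    set h' := x' - xs with hh'
    have b1 : ‖ΔB *ᵥ (kron xs w + kron w xs)‖ ≤ δ * (2 * ‖xs‖ * ‖w‖) := by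
      have h1 := norm_mulVec_le hn0 ΔB (kron xs w + kron w xs)
      rw [← hδ] at h1
      exact le_trans h1 (mul_le_mul_of_nonneg_left (norm_kron_sym_le xs w) hδ0)
    have b2 : ‖Bt *ᵥ (kron h w + kron w h')‖ ≤ bt * ((‖h‖ + ‖h'‖) * ‖w‖) := by
      have h1 := norm_mulVec_le hn0 Bt (kron h w + kron w h')
      rw [← hbt] at h1
      refine le_trans h1 (mul_le_mul_of_nonneg_left ?_ hbt0)
      calc ‖kron h w + kron w h'‖ ≤ ‖kron h w‖ + ‖kron w h'‖ := norm_add_le _ _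
        _ ≤ ‖h‖ * ‖w‖ + ‖w‖ * ‖h'‖ := add_le_add (norm_kron_le h w) (norm_kron_le w h')
        _ = (‖h‖ + ‖h'‖) * ‖w‖ := by ring
    have btot : ‖ΔB *ᵥ (kron xs w + kron w xs) + Bt *ᵥ (kron h w + kron w h')‖
        ≤ δ * (2 * ‖xs‖ * ‖w‖) + bt * ((‖h‖ + ‖h'‖) * ‖w‖) := by
      have t1 := norm_add_le (ΔB *ᵥ (kron xs w + kron w xs)) (Bt *ᵥ (kron h w + kron w h'))
      linarith
    have final := le_trans (norm_mulVec_le hn0 L⁻¹ _)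
      (mul_le_mul_of_nonneg_left btot (hℓ ▸ hℓ0 : (0:ℝ) ≤ matNorm L⁻¹))
    rw [← hℓ] at final
    calc ‖L⁻¹ *ᵥ (ΔB *ᵥ (kron xs w + kron w xs) + Bt *ᵥ (kron h w + kron w h'))‖
        ≤ ℓ * (δ * (2 * ‖xs‖ * ‖w‖) + bt * ((‖h‖ + ‖h'‖) * ‖w‖)) := final
      _ = (2 * ℓ * δ * ‖xs‖ + ℓ * bt * (‖h‖ + ‖h'‖)) * ‖w‖ := by ring
  -- the majorant sequence
  set c0 := ℓ * δ * d with hc0def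
  set c1 := 2 * ℓ * δ * ‖xs‖ with hc1def
  set c2 := ℓ * bt with hc2def
  have hc0nn : 0 ≤ c0 := by rw [hc0def]; positivity
  have hc1nn : 0 ≤ c1 := by rw [hc1def]; positivity
  have hc2nn : 0 ≤ c2 := by rw [hc2def]; positivity
  set t : ℕ → ℝ := majorant c0 c1 c2 with ht
  have ht0 : t 0 = 0 := rfl
  have htsucc : ∀ k, t (k + 1) = c0 + c1 * t k + c2 * t k ^ 2 := fun k => rfl
  have htnn : ∀ k, 0 ≤ t k := by
    intro k
    induction k with
    | zero => rw [ht0]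
    | succ k ih =>
      rw [htsucc]
      linarith [hc0nn, mul_nonneg hc1nn ih, mul_nonneg hc2nn (sq_nonneg (t k))]
  have hξfix : c0 + c1 * ξ + c2 * ξ ^ 2 = ξ := by
    linear_combination hfix + ξ * hA
  have hmono' : ∀ u v : ℝ, 0 ≤ u → u ≤ v →
      c0 + c1 * u + c2 * u ^ 2 ≤ c0 + c1 * v + c2 * v ^ 2 := by
    intro u v hu huv
    linarith [mul_nonneg hc1nn (sub_nonneg.mpr huv),
      mul_nonneg hc2nn (mul_nonneg (by linarith : (0:ℝ) ≤ u + v) (sub_nonneg.mpr huv))]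
  have htle : ∀ k, t k ≤ ξ := by
    intro k
    induction k with
    | zero => rw [ht0]; exact hξ0
    | succ k ih =>
      rw [htsucc]
      calc c0 + c1 * t k + c2 * t k ^ 2 ≤ c0 + c1 * ξ + c2 * ξ ^ 2 :=
            hmono' _ _ (htnn k) ih
        _ = ξ := hξfix
  have htstep : ∀ k, t k ≤ t (k + 1) := by
    intro k
    induction k with
    | zero =>
      rw [ht0, htsucc, ht0]
      linarith [hc0nn]
    | succ k ih =>
      rw [htsucc, htsucc]
      exact hmono' _ _ (htnn k) ih
  have htmono : Monotone t := monotone_nat_of_le_succ htstep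
  -- the iterates
  set y : ℕ → (Fin n → ℝ) := fun k => F^[k] xs with hy
  have hy0 : y 0 = xs := rfl
  have hysucc : ∀ k, y (k + 1) = F (y k) := by
    intro k
    simp only [hy]
    rw [Function.iterate_succ_apply']
  have hyb : ∀ k, ‖y k - xs‖ ≤ t k := by
    intro k
    induction k with
    | zero => simp [hy0, ht0]
    | succ k ih =>
      rw [hysucc, htsucc]
      calc ‖F (y k) - xs‖ ≤ c0 + c1 * ‖y k - xs‖ + c2 * ‖y k - xs‖ ^ 2 := hnormF (y k)
        _ ≤ c0 + c1 * t k + c2 * t k ^ 2 := hmono' _ _ (norm_nonneg _) ih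
  have hyd : ∀ k, ‖y (k + 1) - y k‖ ≤ t (k + 1) - t k := by
    intro k
    induction k with
    | zero =>
      rw [hysucc, hy0, ht0, htsucc, ht0]
      have h1 := hnormF xs
      simp only [sub_self, norm_zero] at h1
      linarith [h1]
    | succ k ih =>
      rw [hysucc (k+1), htsucc (k+1)]
      have h1 := hnormFd (y (k+1)) (y k)
      have h2 := hyb (k+1)
      have h3 := hyb k
      have h4 := htnn k
      have h5 := htstep k
      have hnn1 : (0:ℝ) ≤ ‖y (k+1) - y k‖ := norm_nonneg _
      calc ‖F (y (k+1)) - y (k+1)‖ = ‖F (y (k+1)) - F (y k)‖ := by rw [← hysucc k]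
        _ ≤ (c1 + c2 * (‖y (k+1) - xs‖ + ‖y k - xs‖)) * ‖y (k+1) - y k‖ := h1
        _ ≤ (c1 + c2 * (t (k+1) + t k)) * (t (k+1) - t k) := by
            apply mul_le_mul
            · exact (add_le_add_iff_left c1).mpr
                (mul_le_mul_of_nonneg_left (add_le_add h2 h3) hc2nn)
            · exact ih
            · exact hnn1
            · linarith [hc1nn, mul_nonneg hc2nn (by linarith : (0:ℝ) ≤ t (k+1) + t k)]
        _ = (c0 + c1 * t (k+1) + c2 * t (k+1) ^ 2) - (c0 + c1 * t k + c2 * t k ^ 2) := by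
            ring
        _ = (c0 + c1 * t (k+1) + c2 * t (k+1) ^ 2) - t (k+1) := by rw [htsucc k]
  have htel : ∀ k m, k ≤ m → ‖y m - y k‖ ≤ t m - t k := by
    intro k m hkm
    induction m, hkm using Nat.le_induction with
    | base => simp
    | succ m hkm ih =>
      have h1 := hyd m
      have h2 : y (m+1) - y k = (y (m+1) - y m) + (y m - y k) := by abel
      calc ‖y (m+1) - y k‖ ≤ ‖y (m+1) - y m‖ + ‖y m - y k‖ := by
            rw [h2]; exact norm_add_le _ _
        _ ≤ (t (m+1) - t m) + (t m - t k) := add_le_add h1 ih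
        _ = t (m+1) - t k := by ring
  -- convergence
  have hbdd : BddAbove (Set.range t) := ⟨ξ, by rintro x ⟨k, rfl⟩; exact htle k⟩
  set T := ⨆ k, t k with hT
  have htT : ∀ k, t k ≤ T := fun k => le_ciSup hbdd k
  have htlim : Filter.Tendsto t Filter.atTop (nhds T) := tendsto_atTop_ciSup htmono hbdd
  have hblim : Filter.Tendsto (fun N => T - t N) Filter.atTop (nhds 0) := by
    have h1 := Filter.Tendsto.sub (tendsto_const_nhds (x := T) (f := Filter.atTop)) htlim
    simpa using h1
  have hcauchy : CauchySeq y := by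
    apply cauchySeq_of_le_tendsto_0 (fun N => T - t N) _ hblim
    intro p q N hp hq
    rw [dist_eq_norm]
    rcases le_total p q with h | h
    · rw [norm_sub_rev]
      calc ‖y q - y p‖ ≤ t q - t p := htel p q h
        _ ≤ T - t N := by have := htT q; have := htmono hp; linarith
    · calc ‖y p - y q‖ ≤ t p - t q := htel q p h
        _ ≤ T - t N := by have := htT p; have := htmono hq; linarith
  obtain ⟨xt, hxt⟩ := cauchySeq_tendsto_of_complete hcauchy
  have hxtd : ‖xt - xs‖ ≤ ξ := by
    have hnormlim : Filter.Tendsto (fun k => ‖y k - xs‖) Filter.atTop (nhds ‖xt - xs‖) :=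
      (hxt.sub tendsto_const_nhds).norm
    exact le_of_tendsto hnormlim
      (Filter.Eventually.of_forall fun k => le_trans (hyb k) (htle k))
  have hFcont : Continuous F := by
    rw [hF]
    exact continuous_id.add ((continuous_mulVec _).comp
      ((continuous_const.add ((continuous_mulVec _).comp continuous_kron_self)).sub
        continuous_id))
  have hfixpt : F xt = xt := by
    have h1 : Filter.Tendsto (fun k => y (k+1)) Filter.atTop (nhds xt) :=
      hxt.comp (Filter.tendsto_add_atTop_nat 1)
    have h2 : Filter.Tendsto (fun k => F (y k)) Filter.atTop (nhds (F xt)) :=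
      (hFcont.tendsto xt).comp hxt
    have h3 : (fun k => y (k+1)) = fun k => F (y k) := funext hysucc
    rw [h3] at h1
    exact tendsto_nhds_unique h2 h1
  have hg0 : at_ + Bt *ᵥ kron xt xt - xt = 0 := by
    have h1 : xt + L⁻¹ *ᵥ (at_ + Bt *ᵥ kron xt xt - xt) = xt := by
      have h0 := hfixpt
      simp only [hF] at h0
      exact h0
    have h2 : L⁻¹ *ᵥ (at_ + Bt *ᵥ kron xt xt - xt) = 0 := add_eq_left.mp h1
    have h3 := congrArg (fun v => L *ᵥ v) h2
    simpa [Matrix.mulVec_mulVec, Matrix.mul_nonsing_inv L hdet, Matrix.one_mulVec] using h3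
  have hsol : xt = at_ + Bt *ᵥ kron xt xt := (sub_eq_zero.mp hg0).symm
  have hrange : ∀ i, 0 ≤ xt i ∧ xt i < e i := by
    intro i
    have h1 : |xt i - xs i| ≤ ξ := by
      have ha1 : ‖(xt - xs) i‖ ≤ ‖xt - xs‖ := norm_le_pi_norm _ i
      have ha2 : (xt - xs) i = xt i - xs i := rfl
      rw [ha2, Real.norm_eq_abs] at ha1
      linarith
    have h2 := abs_le.mp h1
    constructor
    · have := hxslo i; linarith [h2.1]
    · rw [he]
      simp only
      have := hxshi i; linarith [h2.2]
  have hxteq : xt = xts := huniq xt xts hsol hrange hxts hxts01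
  rw [← hxteq]
  exact hxtd

end
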